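/- Let (Ω, ℙ) be a probability space, X : Ω → ℝ^D a square-integrable random vector with mean μ^tar = E[X], and suppose Cov(X) = V · diag(s) · Vᵀ where V ∈ ℝ^{D×D} is an orthogonal matrix and s ∈ ℝ^D has nonnegative entries. Let T ⊆ {1,…,D} with |T| = r₂ be a set of indices with s_i > 0 for every i ∈ T, let V̂ ∈ ℝ^{D×r₂} be the submatrix of V formed by the columns indexed by T, and set Z = V̂V̂ᵀ(X − μ^tar) + μ^tar. Let V̂^map ∈ ℝ^{D×r₁} be a matrix with orthonormal columns, P^map = V̂^map(V̂^map)ᵀ, μ^map ∈ ℝ^D, and η ∈ ℝ. Define P* = η·P^map·(I − V̂V̂ᵀ) and b* = η·μ^map − P*·μ^tar. Then Cov(P*X, Z) = 0, and for every matrix P ∈ ℝ^{D×D} and vector b ∈ ℝ^D satisfying Cov(PX, Z) = 0, one has E[‖P*X + b* − η(P^map(X − μ^tar) + μ^map)‖₂²] ≤ E[‖PX + b − η(P^map(X − μ^tar) + μ^map)‖₂²]. -/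

import Mathlib

open MeasureTheory Matrix

/-- Componentwise mean of a random vector. -/
noncomputable def vecMean {Ω : Type*} [MeasureSpace Ω] {D : ℕ} (X : Ω → Fin D → ℝ) :
    Fin D → ℝ := fun i => ∫ ω, X ω i

/-- Cross-covariance matrix `Cov(Y,Z)ᵢⱼ = E[(Yᵢ − E[Yᵢ])(Zⱼ − E[Zⱼ])]`. -/
noncomputable def crossCov {Ω : Type*} [MeasureSpace Ω] {m n : ℕ}
    (Y : Ω → Fin m → ℝ) (Z : Ω → Fin n → ℝ) : Matrix (Fin m) (Fin n) ℝ :=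
  Matrix.of fun i j => ∫ ω, (Y ω i - vecMean Y i) * (Z ω j - vecMean Z j)

section Aux
variable {Ω : Type*} [MeasureSpace Ω] [IsProbabilityMeasure (volume : Measure Ω)] {D : ℕ}
  (X : Ω → Fin D → ℝ) (hX : ∀ i, MemLp (fun ω => X ω i) 2 volume)
lemma l2_mul_integrable {f g : Ω → ℝ} (hf : MemLp f 2 volume) (hg : MemLp g 2 volume) :
    Integrable (fun ω => f ω * g ω) volume := by
  have h1 := (hf.add hg).integrable_sq
  have h2 := hf.integrable_sq
  have h3 := hg.integrable_sq
  have : (fun ω => f ω * g ω)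
      = fun ω => (((f + g) ω) ^ 2 - f ω ^ 2 - g ω ^ 2) / 2 := by
    funext ω; simp only [Pi.add_apply]; ring
  rw [this]
  exact ((h1.sub h2).sub h3).div_const 2

include hX

lemma centered_l2 (k : Fin D) : MemLp (fun ω => X ω k - vecMean X k) 2 volume :=
  (hX k).sub (memLp_const _)

lemma centered_int (k l : Fin D) :
    Integrable (fun ω => (X ω k - vecMean X k) * (X ω l - vecMean X l)) volume :=
  l2_mul_integrable (centered_l2 X hX k) (centered_l2 X hX l)

lemma centered_mean (k : Fin D) : ∫ ω, (X ω k - vecMean X k) = 0 := by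
  rw [integral_sub ((hX k).integrable one_le_two) (integrable_const _), integral_const]
  simp [vecMean]

lemma core_bilin {m n : ℕ} (M : Matrix (Fin m) (Fin D) ℝ) (N : Matrix (Fin n) (Fin D) ℝ)
    (i : Fin m) (j : Fin n) :
    ∫ ω, (∑ k, M i k * (X ω k - vecMean X k)) * (∑ l, N j l * (X ω l - vecMean X l))
      = (M * crossCov X X * Nᵀ) i j := by
  have hfun : ∀ ω, (∑ k, M i k * (X ω k - vecMean X k)) * (∑ l, N j l * (X ω l - vecMean X l))
      = ∑ k, ∑ l, M i k * N j l * ((X ω k - vecMean X k) * (X ω l - vecMean X l)) := by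
    intro ω
    rw [Finset.sum_mul_sum]
    exact Finset.sum_congr rfl fun k _ => Finset.sum_congr rfl fun l _ => by ring
  simp_rw [hfun]
  rw [integral_finset_sum _ fun k _ =>
      integrable_finset_sum _ fun l _ => (centered_int X hX k l).const_mul _]
  have : ∀ k : Fin D, (∫ ω, ∑ l, M i k * N j l * ((X ω k - vecMean X k) * (X ω l - vecMean X l)))
      = ∑ l, M i k * N j l * crossCov X X k l := by
    intro k
    rw [integral_finset_sum _ fun l _ => (centered_int X hX k l).const_mul _]
    exact Finset.sum_congr rfl fun l _ => by rw [integral_const_mul]; rfl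
  simp_rw [this]
  simp only [Matrix.mul_apply, Matrix.transpose_apply, Finset.sum_mul]
  rw [Finset.sum_comm]
  exact Finset.sum_congr rfl fun k _ => Finset.sum_congr rfl fun l _ => by ring

lemma mean_affine {m : ℕ} (M : Matrix (Fin m) (Fin D) ℝ) (a : Fin m → ℝ) (i : Fin m) :
    vecMean (fun ω => M.mulVec (X ω) + a) i = (∑ k, M i k * vecMean X k) + a i := by
  simp only [vecMean, Pi.add_apply, Matrix.mulVec, dotProduct]
  rw [integral_add (integrable_finset_sum _ fun k _ =>
      ((hX k).integrable one_le_two).const_mul _) (integrable_const _),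
    integral_finset_sum _ fun k _ => ((hX k).integrable one_le_two).const_mul _,
    integral_const]
  simp [vecMean, integral_const_mul]

lemma crossCov_affine {m n : ℕ} (M : Matrix (Fin m) (Fin D) ℝ) (a : Fin m → ℝ)
    (N : Matrix (Fin n) (Fin D) ℝ) (d : Fin n → ℝ) :
    crossCov (fun ω => M.mulVec (X ω) + a) (fun ω => N.mulVec (X ω) + d)
      = M * crossCov X X * Nᵀ := by
  ext i j
  show (∫ ω, ((M.mulVec (X ω) + a) i - vecMean (fun ω => M.mulVec (X ω) + a) i)
      * ((N.mulVec (X ω) + d) j - vecMean (fun ω => N.mulVec (X ω) + d) j)) = _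
  have h1 : ∀ ω, (M.mulVec (X ω) + a) i - vecMean (fun ω => M.mulVec (X ω) + a) i
      = ∑ k, M i k * (X ω k - vecMean X k) := by
    intro ω
    rw [mean_affine X hX]
    simp only [Pi.add_apply, Matrix.mulVec, dotProduct, mul_sub]
    rw [Finset.sum_sub_distrib]
    ring
  have h2 : ∀ ω, (N.mulVec (X ω) + d) j - vecMean (fun ω => N.mulVec (X ω) + d) j
      = ∑ l, N j l * (X ω l - vecMean X l) := by
    intro ω
    rw [mean_affine X hX]
    simp only [Pi.add_apply, Matrix.mulVec, dotProduct, mul_sub]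
    rw [Finset.sum_sub_distrib]
    ring
  simp_rw [h1, h2]
  exact core_bilin X hX M N i j

lemma objective_eval {m : ℕ} (A : Matrix (Fin m) (Fin D) ℝ) (c : Fin m → ℝ) :
    ∫ ω, ∑ i, (A.mulVec (X ω - vecMean X) + c) i ^ 2
      = ∑ i, (A * crossCov X X * Aᵀ) i i + ∑ i, c i ^ 2 := by
  have hg : ∀ i : Fin m, MemLp (fun ω => ∑ k, A i k * (X ω k - vecMean X k)) 2 volume := by
    intro i
    have := memLp_finset_sum' (μ := volume) (p := 2) Finset.univ
      (f := fun k => fun ω => A i k * (X ω k - vecMean X k))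
      (fun k _ => (centered_l2 X hX k).const_mul _)
    rwa [show (∑ k : Fin D, fun ω => A i k * (X ω k - vecMean X k))
        = fun ω => ∑ k, A i k * (X ω k - vecMean X k) from funext fun ω => by simp] at this
  have hfun : ∀ ω, (∑ i, (A.mulVec (X ω - vecMean X) + c) i ^ 2)
      = ∑ i, ((∑ k, A i k * (X ω k - vecMean X k)) + c i) ^ 2 := by
    intro ω
    exact Finset.sum_congr rfl fun i _ => by
      simp [Matrix.mulVec, dotProduct]
  have hInt : ∀ i : Fin m, Integrable (fun ω => ((∑ k, A i k * (X ω k - vecMean X k)) + c i) ^ 2) volume :=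
    fun i => ((hg i).add (memLp_const _)).integrable_sq
  simp_rw [hfun]
  rw [integral_finset_sum _ fun i _ => hInt i]
  rw [Finset.sum_add_distrib.symm]
  refine Finset.sum_congr rfl fun i _ => ?_
  have hexp : ∀ ω, ((∑ k, A i k * (X ω k - vecMean X k)) + c i) ^ 2
      = (∑ k, A i k * (X ω k - vecMean X k)) * (∑ k, A i k * (X ω k - vecMean X k))
        + (2 * c i) * (∑ k, A i k * (X ω k - vecMean X k)) + c i ^ 2 := by
    intro ω; ring
  simp_rw [hexp]
  have I1 : Integrable (fun ω => (∑ k, A i k * (X ω k - vecMean X k)) * (∑ k, A i k * (X ω k - vecMean X k))) volume :=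
    l2_mul_integrable (hg i) (hg i)
  have I2 : Integrable (fun ω => 2 * c i * (∑ k, A i k * (X ω k - vecMean X k))) volume :=
    ((hg i).integrable one_le_two).const_mul _
  have I12 : Integrable (fun ω => (∑ k, A i k * (X ω k - vecMean X k)) * (∑ k, A i k * (X ω k - vecMean X k)) + 2 * c i * (∑ k, A i k * (X ω k - vecMean X k))) volume := I1.add I2
  rw [integral_add (f := fun ω => (∑ k, A i k * (X ω k - vecMean X k)) * (∑ k, A i k * (X ω k - vecMean X k)) + 2 * c i * (∑ k, A i k * (X ω k - vecMean X k))) (g := fun _ => c i ^ 2) I12 (integrable_const _),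
    integral_add (f := fun ω => (∑ k, A i k * (X ω k - vecMean X k)) * (∑ k, A i k * (X ω k - vecMean X k))) (g := fun ω => 2 * c i * (∑ k, A i k * (X ω k - vecMean X k))) I1 I2,
    integral_const, integral_const_mul,
    integral_finset_sum _ fun k _ => ((centered_l2 X hX k).integrable one_le_two).const_mul _]
  simp_rw [integral_const_mul, centered_mean X hX, mul_zero, Finset.sum_const_zero]
  rw [core_bilin X hX A A i i]
  simp

end Aux



/-- The projection `P* = η·P^map·(I − V̂V̂ᵀ)` with bias
`b* = η·μ^map − P*·μ^tar` satisfies the guardedness constraint `Cov(P*X, Z) = 0`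
and minimizes the mean-squared objective among all `(P, b)` satisfying the constraint. -/
theorem gloce_closed_form_optimal
    {Ω : Type*} [MeasureSpace Ω] [IsProbabilityMeasure (volume : Measure Ω)]
    {D r₁ r₂ : ℕ}
    (X : Ω → Fin D → ℝ)
    (hX : ∀ i, MemLp (fun ω => X ω i) 2 volume)
    (μtar : Fin D → ℝ) (hμtar : μtar = vecMean X)
    (V : Matrix (Fin D) (Fin D) ℝ) (hV : Vᵀ * V = 1)
    (s : Fin D → ℝ) (hs : ∀ i, 0 ≤ s i)
    (hCovX : crossCov X X = V * Matrix.diagonal s * Vᵀ)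
    (f : Fin r₂ → Fin D) (hf : Function.Injective f)
    (hfs : ∀ k, 0 < s (f k))
    (Vhat : Matrix (Fin D) (Fin r₂) ℝ) (hVhat : Vhat = V.submatrix id f)
    (Z : Ω → Fin D → ℝ)
    (hZ : ∀ ω, Z ω = (Vhat * Vhatᵀ).mulVec (X ω - μtar) + μtar)
    (Vmap : Matrix (Fin D) (Fin r₁) ℝ) (hVmap : Vmapᵀ * Vmap = 1)
    (Pmap : Matrix (Fin D) (Fin D) ℝ) (hPmap : Pmap = Vmap * Vmapᵀ)
    (μmap : Fin D → ℝ) (η : ℝ)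
    (Pstar : Matrix (Fin D) (Fin D) ℝ)
    (hPstar : Pstar = η • (Pmap * (1 - Vhat * Vhatᵀ)))
    (bstar : Fin D → ℝ) (hbstar : bstar = η • μmap - Pstar.mulVec μtar) :
    crossCov (fun ω => Pstar.mulVec (X ω)) Z = 0 ∧
    ∀ (P : Matrix (Fin D) (Fin D) ℝ) (b : Fin D → ℝ),
      crossCov (fun ω => P.mulVec (X ω)) Z = 0 →
      (∫ ω, ∑ i, (Pstar.mulVec (X ω) + bstar
            - η • (Pmap.mulVec (X ω - μtar) + μmap)) i ^ 2)
        ≤ ∫ ω, ∑ i, (P.mulVec (X ω) + b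
            - η • (Pmap.mulVec (X ω - μtar) + μmap)) i ^ 2 := by
  subst hμtar
  -- orthonormality of columns of V
  have hcol : ∀ a b : Fin D, (∑ d, V d a * V d b) = if a = b then 1 else 0 := by
    intro a b
    have := congrFun (congrFun hV a) b
    simpa [Matrix.mul_apply, Matrix.transpose_apply, Matrix.one_apply] using this
  have hVhatT : Vhatᵀ * Vhat = 1 := by
    ext k l
    have h := hcol (f k) (f l)
    simp only [hVhat, Matrix.mul_apply, Matrix.transpose_apply, Matrix.submatrix_apply, id] at *
    rw [h, Matrix.one_apply]
    by_cases hkl : k = l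
    · simp [hkl]
    · rw [if_neg (show ¬f k = f l from fun hh => hkl (hf hh)), if_neg hkl]
  have hVtV_entry : ∀ (k : Fin r₂) (j : Fin D),
      (Vhatᵀ * V) k j = if f k = j then 1 else 0 := by
    intro k j
    have := hcol (f k) j
    simpa [hVhat, Matrix.mul_apply, Matrix.transpose_apply, Matrix.submatrix_apply] using this
  set Dhat : Matrix (Fin r₂) (Fin r₂) ℝ := Matrix.diagonal (fun k => s (f k)) with hDhat
  set J : Matrix (Fin D) (Fin r₂) ℝ := Matrix.of (fun d k => if d = f k then 1 else 0) with hJ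
  have h1 : Vᵀ * Vhat = J := by
    ext d k
    have := hcol d (f k)
    simpa [hVhat, hJ, Matrix.mul_apply, Matrix.transpose_apply, Matrix.submatrix_apply] using this
  have h2 : Matrix.diagonal s * J = J * Dhat := by
    ext d k
    simp only [hJ, hDhat, Matrix.diagonal_mul, Matrix.mul_diagonal, Matrix.of_apply]
    by_cases hd : d = f k
    · simp [hd]
    · simp [hd]
  have h3 : V * J = Vhat := by
    ext i k
    simp [hJ, hVhat, Matrix.mul_apply]
  have hCV : (V * Matrix.diagonal s * Vᵀ) * Vhat = Vhat * Dhat := by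
    calc (V * Matrix.diagonal s * Vᵀ) * Vhat
        = V * Matrix.diagonal s * (Vᵀ * Vhat) := by rw [Matrix.mul_assoc]
      _ = V * (Matrix.diagonal s * J) := by rw [h1, Matrix.mul_assoc]
      _ = V * J * Dhat := by rw [h2, ← Matrix.mul_assoc]
      _ = Vhat * Dhat := by rw [h3]
  have hQform : ∀ Q : Matrix (Fin D) (Fin D) ℝ,
      Q * (V * Matrix.diagonal s * Vᵀ) * (Vhat * Vhatᵀ)ᵀ = Q * Vhat * Dhat * Vhatᵀ := by
    intro Q
    rw [Matrix.transpose_mul, Matrix.transpose_transpose]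
    rw [← Matrix.mul_assoc (Q * (V * Matrix.diagonal s * Vᵀ)) Vhat Vhatᵀ,
      Matrix.mul_assoc Q (V * Matrix.diagonal s * Vᵀ) Vhat, hCV, ← Matrix.mul_assoc]
  -- covariance of Q•X with Z
  have hcc : ∀ Q : Matrix (Fin D) (Fin D) ℝ,
      crossCov (fun ω => Q.mulVec (X ω)) Z = Q * Vhat * Dhat * Vhatᵀ := by
    intro Q
    have hZ' : Z = fun ω => (Vhat * Vhatᵀ).mulVec (X ω)
        + (vecMean X - (Vhat * Vhatᵀ).mulVec (vecMean X)) := by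
      funext ω
      rw [hZ ω, Matrix.mulVec_sub]
      abel
    have hQ0 : (fun ω => Q.mulVec (X ω)) = fun ω => Q.mulVec (X ω) + (0 : Fin D → ℝ) := by
      funext ω; simp
    rw [hQ0, hZ', crossCov_affine X hX Q 0 (Vhat * Vhatᵀ) _, hCovX, hQform]
  have hPstarVhat : Pstar * Vhat = 0 := by
    rw [hPstar, Matrix.smul_mul, Matrix.mul_assoc]
    have : (1 - Vhat * Vhatᵀ) * Vhat = 0 := by
      rw [Matrix.sub_mul, Matrix.one_mul, Matrix.mul_assoc, hVhatT, Matrix.mul_one, sub_self]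
    rw [this, Matrix.mul_zero, smul_zero]
  constructor
  · rw [hcc Pstar, hPstarVhat, Matrix.zero_mul, Matrix.zero_mul]
  intro P b hfeas
  have hPVhat : P * Vhat = 0 := by
    have h0 : P * Vhat * Dhat * Vhatᵀ = 0 := by rw [← hcc P, hfeas]
    have hh1 : P * (Vhat * Dhat) = 0 := by
      have := congrArg (fun M => M * Vhat) h0
      simpa [Matrix.mul_assoc, hVhatT, Matrix.mul_one, Matrix.zero_mul] using this
    have hDD : Dhat * Matrix.diagonal (fun k => (s (f k))⁻¹) = 1 := by
      rw [hDhat, Matrix.diagonal_mul_diagonal]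
      have : (fun k : Fin r₂ => s (f k) * (s (f k))⁻¹) = fun _ => (1 : ℝ) := by
        funext k; exact mul_inv_cancel₀ (hfs k).ne'
      rw [this, Matrix.diagonal_one]
    have := congrArg (fun M => M * Matrix.diagonal (fun k => (s (f k))⁻¹)) hh1
    simpa [Matrix.mul_assoc, hDD, Matrix.mul_one, Matrix.zero_mul] using this
  -- key columnwise comparison
  have hAstar : Pstar - η • Pmap = -(η • (Pmap * (Vhat * Vhatᵀ))) := by
    rw [hPstar, Matrix.mul_sub, Matrix.mul_one, smul_sub]
    abel
  have key : ∀ j : Fin D,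
      s j * ∑ i, ((Pstar - η • Pmap) * V) i j ^ 2
        ≤ s j * ∑ i, ((P - η • Pmap) * V) i j ^ 2 := by
    intro j
    by_cases hj : ∃ k, f k = j
    · obtain ⟨k, rfl⟩ := hj
      have e1 : ∀ (Q : Matrix (Fin D) (Fin D) ℝ) (i : Fin D), (Q * V) i (f k) = (Q * Vhat) i k := by
        intro Q i
        simp [Matrix.mul_apply, hVhat]
      have e2 : (Pstar - η • Pmap) * Vhat = (P - η • Pmap) * Vhat := by
        rw [Matrix.sub_mul, Matrix.sub_mul, hPstarVhat, hPVhat]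
      apply le_of_eq
      congr 1
      exact Finset.sum_congr rfl fun i _ => by rw [e1, e1, e2]
    · have hz : ∀ i, ((Pstar - η • Pmap) * V) i j = 0 := by
        intro i
        rw [hAstar]
        have hassoc : Pmap * (Vhat * Vhatᵀ) * V = Pmap * Vhat * (Vhatᵀ * V) := by
          rw [Matrix.mul_assoc, Matrix.mul_assoc, Matrix.mul_assoc]
        have hentry : (Pmap * Vhat * (Vhatᵀ * V)) i j = 0 := by
          rw [Matrix.mul_apply]
          refine Finset.sum_eq_zero fun k _ => ?_
          rw [hVtV_entry, if_neg (fun h => hj ⟨k, h⟩), mul_zero]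
        simp only [Matrix.neg_mul, Matrix.smul_mul, hassoc, Matrix.neg_apply,
          Matrix.smul_apply, smul_eq_mul, hentry, mul_zero, neg_zero]
      simp only [hz, ne_eq, OfNat.ofNat_ne_zero, not_false_eq_true, zero_pow,
        Finset.sum_const_zero, mul_zero]
      exact mul_nonneg (hs j) (Finset.sum_nonneg fun i _ => sq_nonneg _)
  -- representation of the objectives
  have hrepr : ∀ (Q : Matrix (Fin D) (Fin D) ℝ) (c : Fin D → ℝ) (ω : Ω),
      (Q.mulVec (X ω) + c - η • (Pmap.mulVec (X ω - vecMean X) + μmap))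
        = ((Q - η • Pmap).mulVec (X ω - vecMean X) + (Q.mulVec (vecMean X) + c - η • μmap)) := by
    intro Q c ω
    simp only [Matrix.sub_mulVec, Matrix.mulVec_sub, Matrix.smul_mulVec, smul_add, smul_sub]
    abel
  have htrace : ∀ Q : Matrix (Fin D) (Fin D) ℝ,
      (∑ i, (Q * crossCov X X * Qᵀ) i i) = ∑ j, s j * ∑ i, (Q * V) i j ^ 2 := by
    intro Q
    have hform : Q * crossCov X X * Qᵀ = (Q * V) * Matrix.diagonal s * (Q * V)ᵀ := by
      rw [hCovX, Matrix.transpose_mul]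
      simp only [Matrix.mul_assoc]
    rw [hform]
    have hentry : ∀ i, ((Q * V) * Matrix.diagonal s * (Q * V)ᵀ) i i
        = ∑ j, s j * (Q * V) i j ^ 2 := by
      intro i
      rw [Matrix.mul_apply]
      refine Finset.sum_congr rfl fun j _ => ?_
      rw [Matrix.mul_diagonal, Matrix.transpose_apply]
      ring
    simp_rw [hentry, Finset.mul_sum]
    rw [Finset.sum_comm]
  have hLHS : (∫ ω, ∑ i, (Pstar.mulVec (X ω) + bstar
        - η • (Pmap.mulVec (X ω - vecMean X) + μmap)) i ^ 2)
      = ∑ i, ((Pstar - η • Pmap) * crossCov X X * (Pstar - η • Pmap)ᵀ) i i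
        + ∑ i, (Pstar.mulVec (vecMean X) + bstar - η • μmap) i ^ 2 := by
    simp_rw [hrepr Pstar bstar]
    exact objective_eval X hX _ _
  have hRHS : (∫ ω, ∑ i, (P.mulVec (X ω) + b
        - η • (Pmap.mulVec (X ω - vecMean X) + μmap)) i ^ 2)
      = ∑ i, ((P - η • Pmap) * crossCov X X * (P - η • Pmap)ᵀ) i i
        + ∑ i, (P.mulVec (vecMean X) + b - η • μmap) i ^ 2 := by
    simp_rw [hrepr P b]
    exact objective_eval X hX _ _
  have hcstar : Pstar.mulVec (vecMean X) + bstar - η • μmap = 0 := by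
    rw [hbstar]; abel
  rw [hLHS, hRHS, hcstar, htrace, htrace]
  simp only [Pi.zero_apply, ne_eq, OfNat.ofNat_ne_zero, not_false_eq_true, zero_pow,
    Finset.sum_const_zero, add_zero]
  exact le_add_of_le_of_nonneg (Finset.sum_le_sum fun j _ => key j)
    (Finset.sum_nonneg fun i _ => sq_nonneg _)
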